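/- Let θ̃_prev ∈ ℝ^p, let G be a p×p real matrix, set θ̃⁻ := G θ̃_prev, let e ∈ ℝ^r, let F be an r×r real symmetric matrix with F e = L θ̃⁻, and define θ̃ := θ̃⁻ − P Lᵀ R⁻¹ e. If (F − I) R⁻¹ (F − I) ≼ (L P⁻ Lᵀ + R)⁻¹ and Gᵀ (P⁻)⁻¹ G ≼ (P⁻)⁻¹ in the Loewner order, then the Lyapunov value does not increase: θ̃ᵀ P⁻¹ θ̃ ≤ θ̃_prevᵀ (P⁻)⁻¹ θ̃_prev. -/

import Mathlib

open Matrix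

private lemma dp_swap {m n : ℕ} (M : Matrix (Fin m) (Fin n) ℝ) (x : Fin m → ℝ) (y : Fin n → ℝ) :
    x ⬝ᵥ (M *ᵥ y) = (Mᵀ *ᵥ x) ⬝ᵥ y := by
  rw [Matrix.dotProduct_mulVec, Matrix.mulVec_transpose]

private lemma dp_swap' {m n : ℕ} (M : Matrix (Fin m) (Fin n) ℝ) (x : Fin n → ℝ) (y : Fin m → ℝ) :
    (M *ᵥ x) ⬝ᵥ y = x ⬝ᵥ (Mᵀ *ᵥ y) := by
  rw [dp_swap, Matrix.transpose_transpose]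

/-- One-step Lyapunov decrease for the EKF parameter estimator: under the Loewner conditions
`(F − I) R⁻¹ (F − I) ≼ (L P⁻ Lᵀ + R)⁻¹` and `Gᵀ (P⁻)⁻¹ G ≼ (P⁻)⁻¹`, the Lyapunov value
does not increase: `θ̃ᵀ P⁻¹ θ̃ ≤ θ̃_prevᵀ (P⁻)⁻¹ θ̃_prev`. -/
theorem ekf_one_step_lyapunov_decrease
    (p r : ℕ) (hp : 0 < p) (hr : 0 < r)
    (Pminus : Matrix (Fin p) (Fin p) ℝ) (hPminus : Pminus.PosDef)
    (R : Matrix (Fin r) (Fin r) ℝ) (hR : R.PosDef)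
    (L : Matrix (Fin r) (Fin p) ℝ)
    (S : Matrix (Fin r) (Fin r) ℝ) (hS : S = L * Pminus * Lᵀ + R)
    (K : Matrix (Fin p) (Fin r) ℝ) (hK : K = Pminus * Lᵀ * S⁻¹)
    (P : Matrix (Fin p) (Fin p) ℝ) (hP : P = (1 - K * L) * Pminus)
    (θprev : Fin p → ℝ) (G : Matrix (Fin p) (Fin p) ℝ)
    (θminus : Fin p → ℝ) (hθminus : θminus = G *ᵥ θprev)
    (e : Fin r → ℝ)
    (F : Matrix (Fin r) (Fin r) ℝ) (hF : F.IsSymm)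
    (hFe : F *ᵥ e = L *ᵥ θminus)
    (θ : Fin p → ℝ) (hθ : θ = θminus - (P * Lᵀ * R⁻¹) *ᵥ e)
    (hLoew1 : ((L * Pminus * Lᵀ + R)⁻¹ - (F - 1) * R⁻¹ * (F - 1)).PosSemidef)
    (hLoew2 : (Pminus⁻¹ - Gᵀ * Pminus⁻¹ * G).PosSemidef) :
    θ ⬝ᵥ (P⁻¹ *ᵥ θ) ≤ θprev ⬝ᵥ (Pminus⁻¹ *ᵥ θprev) := by
  -- invertibility and symmetry facts
  have hRd : IsUnit R.det := (Matrix.isUnit_iff_isUnit_det _).mp hR.isUnit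
  have hPmd : IsUnit Pminus.det := (Matrix.isUnit_iff_isUnit_det _).mp hPminus.isUnit
  have hSpd : S.PosDef := by
    rw [hS]
    have h1 := hPminus.posSemidef.mul_mul_conjTranspose_same L
    rw [Matrix.conjTranspose_eq_transpose_of_trivial] at h1
    exact Matrix.PosDef.posSemidef_add h1 hR
  have hSd : IsUnit S.det := (Matrix.isUnit_iff_isUnit_det _).mp hSpd.isUnit
  have hRsymm : Rᵀ = R := by
    have h := hR.isHermitian
    rwa [Matrix.IsHermitian, Matrix.conjTranspose_eq_transpose_of_trivial] at h
  have hPmsymm : Pminusᵀ = Pminus := by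
    have h := hPminus.isHermitian
    rwa [Matrix.IsHermitian, Matrix.conjTranspose_eq_transpose_of_trivial] at h
  have hRinvT : (R⁻¹)ᵀ = R⁻¹ := by rw [Matrix.transpose_nonsing_inv, hRsymm]
  have hPminvT : (Pminus⁻¹)ᵀ = Pminus⁻¹ := by rw [Matrix.transpose_nonsing_inv, hPmsymm]
  have hFt : Fᵀ = F := hF
  have hRR : R * R⁻¹ = 1 := Matrix.mul_nonsing_inv _ hRd
  have hRR' : R⁻¹ * R = 1 := Matrix.nonsing_inv_mul _ hRd
  have hSS : S * S⁻¹ = 1 := Matrix.mul_nonsing_inv _ hSd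
  have hSS' : S⁻¹ * S = 1 := Matrix.nonsing_inv_mul _ hSd
  have hA : L * Pminus * Lᵀ = S - R := by rw [hS, add_sub_cancel_right]
  -- key algebraic identities
  have idK : (1 - K * L) * (Pminus * Lᵀ) = K * R := by
    calc (1 - K * L) * (Pminus * Lᵀ)
        = Pminus * Lᵀ - Pminus * Lᵀ * S⁻¹ * (L * Pminus * Lᵀ) := by
          rw [hK, Matrix.sub_mul, Matrix.one_mul]; simp only [Matrix.mul_assoc]
      _ = Pminus * Lᵀ - (Pminus * Lᵀ * (S⁻¹ * S) - Pminus * Lᵀ * S⁻¹ * R) := by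
          rw [hA, Matrix.mul_sub]; simp only [Matrix.mul_assoc]
      _ = Pminus * Lᵀ * S⁻¹ * R := by rw [hSS', Matrix.mul_one]; abel
      _ = K * R := by rw [hK]
  have key1 : P * (Pminus⁻¹ + Lᵀ * R⁻¹ * L) = 1 := by
    have h1 : P * Pminus⁻¹ = 1 - K * L := by
      rw [hP, Matrix.mul_nonsing_inv_cancel_right _ _ hPmd]
    have h2 : P * (Lᵀ * R⁻¹ * L) = K * L := by
      calc P * (Lᵀ * R⁻¹ * L) = ((1 - K * L) * (Pminus * Lᵀ)) * (R⁻¹ * L) := by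
            rw [hP]; simp only [Matrix.mul_assoc]
        _ = K * (R * R⁻¹) * L := by rw [idK]; simp only [Matrix.mul_assoc]
        _ = K * L := by rw [hRR, Matrix.mul_one]
    rw [Matrix.mul_add, h1, h2]; abel
  have hPinv : P⁻¹ = Pminus⁻¹ + Lᵀ * R⁻¹ * L := Matrix.inv_eq_right_inv key1
  have hPinvP : P⁻¹ * P = 1 := by rw [hPinv]; exact mul_eq_one_comm.mp key1
  have key2 : L * P * Lᵀ = R - R * S⁻¹ * R := by
    calc L * P * Lᵀ = L * ((1 - K * L) * (Pminus * Lᵀ)) := by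
            rw [hP]; simp only [Matrix.mul_assoc]
      _ = L * (K * R) := by rw [idK]
      _ = (L * Pminus * Lᵀ) * (S⁻¹ * R) := by rw [hK]; simp only [Matrix.mul_assoc]
      _ = S * S⁻¹ * R - R * S⁻¹ * R := by
            rw [hA, Matrix.sub_mul]; simp only [Matrix.mul_assoc]
      _ = R - R * S⁻¹ * R := by rw [hSS, Matrix.one_mul]
  have hPinvT : (P⁻¹)ᵀ = P⁻¹ := by
    rw [hPinv, Matrix.transpose_add, hPminvT, Matrix.transpose_mul, Matrix.transpose_mul,
      Matrix.transpose_transpose, hRinvT, Matrix.mul_assoc]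
  have hLθ : L *ᵥ θminus = F *ᵥ e := hFe.symm
  -- vector-level identities
  have hNc : P⁻¹ *ᵥ ((P * Lᵀ * R⁻¹) *ᵥ e) = (Lᵀ * R⁻¹) *ᵥ e := by
    rw [Matrix.mulVec_mulVec]
    have : P⁻¹ * (P * Lᵀ * R⁻¹) = Lᵀ * R⁻¹ := by
      calc P⁻¹ * (P * Lᵀ * R⁻¹) = (P⁻¹ * P) * (Lᵀ * R⁻¹) := by simp only [Matrix.mul_assoc]
        _ = Lᵀ * R⁻¹ := by rw [hPinvP, Matrix.one_mul]
    rw [this]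
  have hRLθ : (R⁻¹ * L) *ᵥ θminus = (R⁻¹ * F) *ᵥ e := by
    rw [← Matrix.mulVec_mulVec, hLθ, Matrix.mulVec_mulVec]
  have e2 : θminus ⬝ᵥ ((Lᵀ * R⁻¹) *ᵥ e) = e ⬝ᵥ ((R⁻¹ * F) *ᵥ e) := by
    rw [dp_swap, Matrix.transpose_mul, Matrix.transpose_transpose, hRinvT, hRLθ,
      dotProduct_comm]
  have e1 : θminus ⬝ᵥ ((Lᵀ * R⁻¹ * L) *ᵥ θminus) = e ⬝ᵥ ((F * R⁻¹ * F) *ᵥ e) := by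
    have h1 : (Lᵀ * R⁻¹ * L) *ᵥ θminus = Lᵀ *ᵥ ((R⁻¹ * F) *ᵥ e) := by
      rw [← hRLθ, Matrix.mulVec_mulVec, Matrix.mul_assoc]
    rw [h1, dp_swap, Matrix.transpose_transpose, hLθ, dp_swap', hFt, Matrix.mulVec_mulVec,
      ← Matrix.mul_assoc]
  have eU : θminus ⬝ᵥ (P⁻¹ *ᵥ θminus) =
      θminus ⬝ᵥ (Pminus⁻¹ *ᵥ θminus) + e ⬝ᵥ ((F * R⁻¹ * F) *ᵥ e) := by
    rw [hPinv, Matrix.add_mulVec, dotProduct_add, e1]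
  have term3 : ((P * Lᵀ * R⁻¹) *ᵥ e) ⬝ᵥ (P⁻¹ *ᵥ θminus) = e ⬝ᵥ ((R⁻¹ * F) *ᵥ e) := by
    rw [dotProduct_comm, dp_swap' P⁻¹, hPinvT, hNc, e2]
  have hMat4 : (R⁻¹ * L) * (P * Lᵀ * R⁻¹) = R⁻¹ - S⁻¹ := by
    calc (R⁻¹ * L) * (P * Lᵀ * R⁻¹) = R⁻¹ * (L * P * Lᵀ) * R⁻¹ := by
            simp only [Matrix.mul_assoc]
      _ = R⁻¹ * (R - R * S⁻¹ * R) * R⁻¹ := by rw [key2]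
      _ = (R⁻¹ * R) * R⁻¹ - (R⁻¹ * R) * (S⁻¹ * (R * R⁻¹)) := by
            rw [Matrix.mul_sub, Matrix.sub_mul]; simp only [Matrix.mul_assoc]
      _ = R⁻¹ - S⁻¹ := by rw [hRR', hRR]; simp only [Matrix.one_mul, Matrix.mul_one]
  have term4 : ((P * Lᵀ * R⁻¹) *ᵥ e) ⬝ᵥ ((Lᵀ * R⁻¹) *ᵥ e) =
      e ⬝ᵥ (R⁻¹ *ᵥ e) - e ⬝ᵥ (S⁻¹ *ᵥ e) := by
    rw [dp_swap, Matrix.transpose_mul, Matrix.transpose_transpose, hRinvT,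
      Matrix.mulVec_mulVec, hMat4, Matrix.sub_mulVec, sub_dotProduct, dotProduct_comm,
      dotProduct_comm (S⁻¹ *ᵥ e)]
  have eFR : e ⬝ᵥ ((F * R⁻¹) *ᵥ e) = e ⬝ᵥ ((R⁻¹ * F) *ᵥ e) := by
    rw [dp_swap, Matrix.transpose_mul, hRinvT, hFt, dotProduct_comm]
  have eExp : e ⬝ᵥ (((F - 1) * R⁻¹ * (F - 1)) *ᵥ e) =
      e ⬝ᵥ ((F * R⁻¹ * F) *ᵥ e) - e ⬝ᵥ ((F * R⁻¹) *ᵥ e) - e ⬝ᵥ ((R⁻¹ * F) *ᵥ e)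
        + e ⬝ᵥ (R⁻¹ *ᵥ e) := by
    have h : (F - 1) * R⁻¹ * (F - 1) = F * R⁻¹ * F - F * R⁻¹ - R⁻¹ * F + R⁻¹ := by noncomm_ring
    rw [h, Matrix.add_mulVec, Matrix.sub_mulVec, Matrix.sub_mulVec, dotProduct_add,
      dotProduct_sub, dotProduct_sub]
  -- the Lyapunov value identity
  have hV : θ ⬝ᵥ (P⁻¹ *ᵥ θ) = θminus ⬝ᵥ (Pminus⁻¹ *ᵥ θminus)
      + e ⬝ᵥ (((F - 1) * R⁻¹ * (F - 1)) *ᵥ e) - e ⬝ᵥ (S⁻¹ *ᵥ e) := by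
    rw [hθ, Matrix.mulVec_sub, dotProduct_sub, sub_dotProduct, sub_dotProduct, eU, term3, hNc,
      e2, term4, eExp, eFR]
    ring
  -- the G-contraction identity
  have eG : θminus ⬝ᵥ (Pminus⁻¹ *ᵥ θminus) = θprev ⬝ᵥ ((Gᵀ * Pminus⁻¹ * G) *ᵥ θprev) := by
    rw [hθminus, dp_swap' G, Matrix.mulVec_mulVec, Matrix.mulVec_mulVec]
  -- positivity from the Loewner hypotheses
  rw [← hS] at hLoew1
  have h1 := hLoew1.dotProduct_mulVec_nonneg e
  have h2 := hLoew2.dotProduct_mulVec_nonneg θprev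
  simp only [star_trivial, Matrix.sub_mulVec, dotProduct_sub] at h1 h2
  rw [hV, eG]
  linarith
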